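/- The Integrated Gradients method satisfies non-decreasing positivity: if F : [a,b] → ℝ is continuously differentiable and F is non-decreasing from x' to x̄ (meaning F∘γ is monotone non-decreasing in t for every monotone path γ from x' to x̄), then IG_i(x̄, x', F) ≥ 0 for every component i. -/

import Mathlib

open MeasureTheory

/-- The partial derivative of `F : ℝⁿ → ℝ` in the `i`-th coordinate at `x`. -/
noncomputable def pderiv' {n : ℕ} (F : (Fin n → ℝ) → ℝ) (i : Fin n) (x : Fin n → ℝ) : ℝ :=
  deriv (fun t => F (Function.update x i t)) (x i)

/-- The Integrated Gradients attribution: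
`IG_i(x̄, x', F) = (x̄_i − x'_i) ∫₀¹ (∂F/∂x_i)(x' + t(x̄ − x')) dt`. -/
noncomputable def IG {n : ℕ} (xbar x' : Fin n → ℝ) (F : (Fin n → ℝ) → ℝ) : Fin n → ℝ :=
  fun i => (xbar i - x' i) * ∫ t in (0:ℝ)..1, pderiv' F i (x' + t • (xbar - x'))

/-- `γ` is piecewise smooth on `[0,1]`: there is a partition
`0 = p 0 < p 1 < ... < p k = 1` such that `γ` is continuously differentiable on
each subinterval. -/
def PiecewiseSmooth {n : ℕ} (γ : ℝ → (Fin n → ℝ)) : Prop :=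
  ∃ k : ℕ, ∃ p : Fin (k + 1) → ℝ, StrictMono p ∧ p 0 = 0 ∧ p (Fin.last k) = 1 ∧
    ∀ j : Fin k, ContDiffOn ℝ 1 γ (Set.Icc (p j.castSucc) (p j.succ))

/-- A monotone path in `[a,b]` from `x'` to `x̄`: a continuous, piecewise smooth
curve staying in `[a,b]`, each of whose components is monotone in `t`. -/
def IsMonotonePath {n : ℕ} (a b x' xbar : Fin n → ℝ) (γ : ℝ → (Fin n → ℝ)) : Prop :=
  ContinuousOn γ (Set.Icc 0 1) ∧ PiecewiseSmooth γ ∧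
  γ 0 = x' ∧ γ 1 = xbar ∧ (∀ t ∈ Set.Icc (0:ℝ) 1, γ t ∈ Set.uIcc a b) ∧
  ∀ i, MonotoneOn (fun t => γ t i) (Set.Icc 0 1) ∨ AntitoneOn (fun t => γ t i) (Set.Icc 0 1)

/-- `F` is non-decreasing from `x'` to `x̄`: `F ∘ γ` is monotone non-decreasing in `t`
for every monotone path `γ` from `x'` to `x̄`. -/
def NonDecreasingFromTo {n : ℕ} (a b x' xbar : Fin n → ℝ) (F : (Fin n → ℝ) → ℝ) : Prop :=
  ∀ γ : ℝ → (Fin n → ℝ), IsMonotonePath a b x' xbar γ →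
    MonotoneOn (fun t => F (γ t)) (Set.Icc 0 1)

noncomputable def Psq : ℝ → ℝ := fun r => (max r 0)^2

lemma Psq_of_nonneg {r : ℝ} (h : 0 ≤ r) : Psq r = r^2 := by simp [Psq, max_eq_left h]
lemma Psq_of_nonpos {r : ℝ} (h : r ≤ 0) : Psq r = 0 := by simp [Psq, max_eq_right h]

lemma Psq_hasDerivAt (r : ℝ) : HasDerivAt Psq (2 * max r 0) r := by
  rcases lt_trichotomy r 0 with h|h|h
  · have he : Psq =ᶠ[nhds r] fun _ => 0 := by
      filter_upwards [Iio_mem_nhds h] with y hy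
      simp [Psq, max_eq_right (le_of_lt (Set.mem_Iio.mp hy))]
    rw [max_eq_right h.le]
    simpa using (hasDerivAt_const r (0:ℝ)).congr_of_eventuallyEq he
  · subst h
    rw [hasDerivAt_iff_isLittleO]
    simp only [max_self, mul_zero, smul_zero, sub_zero, Psq, max_self]
    rw [Asymptotics.isLittleO_iff]
    intro c hc
    filter_upwards [Metric.ball_mem_nhds (0:ℝ) hc] with y hy
    have h1 : |y| < c := by simpa [Real.dist_eq] using hy
    have h2 : (0:ℝ) ≤ max y 0 := le_max_right _ _
    have h3 : max y 0 ≤ |y| := max_le (le_abs_self y) (abs_nonneg y)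
    have : ‖(max y 0)^2 - (max (0:ℝ) 0)^2‖ ≤ c * ‖y‖ := by
      rw [Real.norm_eq_abs, Real.norm_eq_abs]
      simp only [max_self]
      rw [abs_of_nonneg (by nlinarith)]
      nlinarith [abs_nonneg y]
    simpa using this
  · have he : Psq =ᶠ[nhds r] fun y => y^2 := by
      filter_upwards [Ioi_mem_nhds h] with y hy
      simp [Psq, max_eq_left (le_of_lt (Set.mem_Ioi.mp hy))]
    rw [max_eq_left h.le]
    have : HasDerivAt (fun y : ℝ => y^2) (2*r) r := by simpa using hasDerivAt_pow 2 r
    exact this.congr_of_eventuallyEq he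

lemma Psq_contDiff : ContDiff ℝ 1 Psq := by
  rw [contDiff_one_iff_deriv]
  refine ⟨fun r => (Psq_hasDerivAt r).differentiableAt, ?_⟩
  have : deriv Psq = fun r => 2 * max r 0 := funext fun r => (Psq_hasDerivAt r).deriv
  rw [this]
  exact continuous_const.mul (continuous_id.max continuous_const)

lemma hasDerivAt_Psq_sub (c r : ℝ) : HasDerivAt (fun r => Psq (r - c)) (2 * max (r - c) 0) r := by
  simpa [Function.comp_def] using (Psq_hasDerivAt (r - c)).comp r ((hasDerivAt_id r).sub_const c)

lemma hasDerivAt_Psq_const_sub (c r : ℝ) :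
    HasDerivAt (fun r => Psq (c - r)) (-(2 * max (c - r) 0)) r := by
  simpa [Function.comp_def] using (Psq_hasDerivAt (c - r)).comp r ((hasDerivAt_id r).const_sub c)

lemma deriv_nonneg_of_monotoneOn {φ : ℝ → ℝ} {c h : ℝ} (hh : 0 < h)
    (hd : HasDerivAt φ c 0) (hm : MonotoneOn φ (Set.Icc 0 h)) : 0 ≤ c := by
  have ht : Filter.Tendsto (slope φ 0) (nhdsWithin 0 (Set.Ioi 0)) (nhds c) :=
    (hasDerivAt_iff_tendsto_slope.mp hd).mono_left
      (nhdsWithin_mono _ (fun x hx => ne_of_gt hx))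
  refine ge_of_tendsto ht ?_
  filter_upwards [Ioc_mem_nhdsGT_of_mem ⟨le_rfl, hh⟩] with u hu
  have h0 : φ 0 ≤ φ u := hm ⟨le_rfl, hh.le⟩ ⟨hu.1.le, hu.2⟩ hu.1.le
  rw [slope_def_field]
  apply div_nonneg (by linarith) (by linarith [hu.1])


/-- convexity bound -/
lemma between_bound {lo hi A B m : ℝ} (h1 : lo ≤ A) (h2 : A ≤ hi) (h3 : lo ≤ B) (h4 : B ≤ hi)
    (h5 : 0 ≤ m) (h6 : m ≤ 1) : lo ≤ A + m * (B - A) ∧ A + m * (B - A) ≤ hi := by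
  constructor <;> nlinarith [mul_nonneg h5 (sub_nonneg.mpr h3), mul_nonneg h5 (sub_nonneg.mpr h4),
    mul_nonneg (sub_nonneg.mpr h6) (sub_nonneg.mpr h1), mul_nonneg (sub_nonneg.mpr h6) (sub_nonneg.mpr h2)]


set_option maxHeartbeats 2000000 in
/-- **Non-decreasing positivity of Integrated Gradients**: if `F` is continuously
differentiable on `[a,b]` and non-decreasing from `x'` to `x̄`, then
`IG_i(x̄, x', F) ≥ 0` for every component `i`. -/
theorem IG_NDP {n : ℕ} (a b : Fin n → ℝ) (F : (Fin n → ℝ) → ℝ)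
    (hF : ContDiffOn ℝ 1 F (Set.uIcc a b))
    (xbar x' : Fin n → ℝ) (hxbar : xbar ∈ Set.uIcc a b) (hx' : x' ∈ Set.uIcc a b)
    (hnd : NonDecreasingFromTo a b x' xbar F) :
    ∀ i, 0 ≤ IG xbar x' F i := by
  intro i
  by_cases hΔi : xbar i - x' i = 0
  · simp [IG, hΔi]
  have huIcc : Set.uIcc a b = Set.Icc (a ⊓ b) (a ⊔ b) := rfl
  rw [huIcc, Set.mem_Icc] at hxbar hx'
  have hx'lo : ∀ j, a j ⊓ b j ≤ x' j := fun j => hx'.1 j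
  have hx'hi : ∀ j, x' j ≤ a j ⊔ b j := fun j => hx'.2 j
  have hxblo : ∀ j, a j ⊓ b j ≤ xbar j := fun j => hxbar.1 j
  have hxbhi : ∀ j, xbar j ≤ a j ⊔ b j := fun j => hxbar.2 j
  have key : ∀ t ∈ Set.Ioo (0:ℝ) 1,
      0 ≤ (xbar i - x' i) * pderiv' F i (x' + t • (xbar - x')) := by
    intro t ht
    obtain ⟨ht0, ht1⟩ := ht
    set h : ℝ := (1 - t)/2 with hhdef
    have hh : 0 < h := by rw [hhdef]; linarith
    set x : Fin n → ℝ := x' + t • (xbar - x') with hxdef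
    have hxap : ∀ j, x j = x' j + t * (xbar j - x' j) := by
      intro j; rw [hxdef]; simp [Pi.add_apply, Pi.smul_apply, Pi.sub_apply, smul_eq_mul]
    set σ : ℝ → ℝ := fun r => t * (1 - 9 * Psq (1/3 - r)) + (1 - t) * (9 * Psq (r - 2/3)) with hσdef
    set κ : ℝ → ℝ := fun r =>
      σ r + h * (18 * Psq (r - 1/3) - 36 * Psq (r - 1/2) + 9 * Psq (r - 2/3)) with hκdef
    have hσD : ∀ r, HasDerivAt σ
        (18 * t * max (1/3 - r) 0 + 18 * (1 - t) * max (r - 2/3) 0) r := by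
      intro r
      have h1 := (((hasDerivAt_Psq_const_sub (1/3) r).const_mul (9:ℝ)).const_sub (1:ℝ)).const_mul t
      have h2 := ((hasDerivAt_Psq_sub (2/3) r).const_mul (9:ℝ)).const_mul (1 - t)
      convert h1.add h2 using 1
      · rfl
      · rfl
      · rfl
      · ring
    have hκD : ∀ r, HasDerivAt κ
        ((18 * t * max (1/3 - r) 0 + 18 * (1 - t) * max (r - 2/3) 0) +
          h * (36 * max (r - 1/3) 0 - 72 * max (r - 1/2) 0 + 18 * max (r - 2/3) 0)) r := by
      intro r
      have h1 := ((hasDerivAt_Psq_sub (1/3) r).const_mul (18:ℝ))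
      have h2 := ((hasDerivAt_Psq_sub (1/2) r).const_mul (36:ℝ))
      have h3 := ((hasDerivAt_Psq_sub (2/3) r).const_mul (9:ℝ))
      have h4 := (((h1.sub h2).add h3).const_mul h)
      convert (hσD r).add h4 using 1
      · rfl
      · rfl
      · rfl
      · ring
    have hσmono : Monotone σ := by
      apply monotone_of_deriv_nonneg (fun r => (hσD r).differentiableAt)
      intro r
      rw [(hσD r).deriv]
      have m1 : (0:ℝ) ≤ max (1/3 - r) 0 := le_max_right _ _
      have m2 : (0:ℝ) ≤ max (r - 2/3) 0 := le_max_right _ _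
      nlinarith
    have hκmono : Monotone κ := by
      apply monotone_of_deriv_nonneg (fun r => (hκD r).differentiableAt)
      intro r
      rw [(hκD r).deriv]
      have m1 : (0:ℝ) ≤ max (1/3 - r) 0 := le_max_right _ _
      have key2 : 0 ≤ 27 * max (r - 2/3) 0 + 18 * max (r - 1/3) 0 - 36 * max (r - 1/2) 0 := by
        rcases le_total r (1/2) with hr | hr
        · rw [max_eq_right (by linarith : r - 1/2 ≤ 0)]
          have q1 := le_max_right (r - 2/3) (0:ℝ)
          have q2 := le_max_right (r - 1/3) (0:ℝ)
          linarith
        · rw [max_eq_left (by linarith : (0:ℝ) ≤ r - 1/2),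
              max_eq_left (by linarith : (0:ℝ) ≤ r - 1/3)]
          rcases le_total r (2/3) with hr2 | hr2
          · rw [max_eq_right (by linarith : r - 2/3 ≤ 0)]; linarith
          · rw [max_eq_left (by linarith : (0:ℝ) ≤ r - 2/3)]; linarith
      have hexp : 18 * t * max (1/3 - r) 0 + 18 * (1 - t) * max (r - 2/3) 0 +
          h * (36 * max (r - 1/3) 0 - 72 * max (r - 1/2) 0 + 18 * max (r - 2/3) 0)
          = 18 * t * max (1/3 - r) 0 + (1 - t) *
            (27 * max (r - 2/3) 0 + 18 * max (r - 1/3) 0 - 36 * max (r - 1/2) 0) := by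
        rw [hhdef]; ring
      rw [hexp]
      nlinarith
    have hσ0 : σ 0 = 0 := by
      rw [hσdef]; simp only
      rw [Psq_of_nonneg (by norm_num : (0:ℝ) ≤ 1/3 - 0),
          Psq_of_nonpos (by norm_num : (0:ℝ) - 2/3 ≤ 0)]
      norm_num
    have hσ1 : σ 1 = 1 := by
      rw [hσdef]; simp only
      rw [Psq_of_nonpos (by norm_num : (1:ℝ)/3 - 1 ≤ 0),
          Psq_of_nonneg (by norm_num : (0:ℝ) ≤ 1 - 2/3)]
      norm_num
    have hσmid : ∀ r ∈ Set.Icc (1/3:ℝ) (2/3), σ r = t := by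
      intro r hr
      rw [hσdef]; simp only
      rw [Psq_of_nonpos (by linarith [hr.1] : (1:ℝ)/3 - r ≤ 0),
          Psq_of_nonpos (by linarith [hr.2] : r - 2/3 ≤ 0)]
      ring
    have hκ0 : κ 0 = 0 := by
      rw [hκdef]; simp only
      rw [hσ0, Psq_of_nonpos (by norm_num : (0:ℝ) - 1/3 ≤ 0),
          Psq_of_nonpos (by norm_num : (0:ℝ) - 1/2 ≤ 0),
          Psq_of_nonpos (by norm_num : (0:ℝ) - 2/3 ≤ 0)]
      ring
    have hκ1 : κ 1 = 1 := by
      rw [hκdef]; simp only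
      rw [hσ1, Psq_of_nonneg (by norm_num : (0:ℝ) ≤ 1 - 1/3),
          Psq_of_nonneg (by norm_num : (0:ℝ) ≤ 1 - 1/2),
          Psq_of_nonneg (by norm_num : (0:ℝ) ≤ 1 - 2/3)]
      norm_num
    have hκthird : κ (1/3) = t := by
      rw [hκdef]; simp only
      rw [hσmid (1/3) (by norm_num), Psq_of_nonpos (by norm_num : (1:ℝ)/3 - 1/3 ≤ 0),
          Psq_of_nonpos (by norm_num : (1:ℝ)/3 - 1/2 ≤ 0),
          Psq_of_nonpos (by norm_num : (1:ℝ)/3 - 2/3 ≤ 0)]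
      ring
    have hκtwothird : κ (2/3) = t + h := by
      rw [hκdef]; simp only
      rw [hσmid (2/3) (by norm_num), Psq_of_nonneg (by norm_num : (0:ℝ) ≤ 2/3 - 1/3),
          Psq_of_nonneg (by norm_num : (0:ℝ) ≤ 2/3 - 1/2),
          Psq_of_nonpos (by norm_num : (2:ℝ)/3 - 2/3 ≤ 0)]
      norm_num
    set γ : ℝ → Fin n → ℝ := fun r j => x' j + (if j = i then κ r else σ r) * (xbar j - x' j)
      with hγdef
    have hmval : ∀ r ∈ Set.Icc (0:ℝ) 1, ∀ j : Fin n,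
        0 ≤ (if j = i then κ r else σ r) ∧ (if j = i then κ r else σ r) ≤ 1 := by
      intro r hr j
      by_cases hj : j = i
      · rw [if_pos hj]
        exact ⟨hκ0 ▸ hκmono hr.1, hκ1 ▸ hκmono hr.2⟩
      · rw [if_neg hj]
        exact ⟨hσ0 ▸ hσmono hr.1, hσ1 ▸ hσmono hr.2⟩
    have hσcont : Continuous σ := Differentiable.continuous (fun r => (hσD r).differentiableAt)
    have hκcont : Continuous κ := Differentiable.continuous (fun r => (hκD r).differentiableAt)
    have hpc : ∀ c:ℝ, ContDiff ℝ 1 (fun r : ℝ => Psq (r - c)) := fun c =>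
      Psq_contDiff.comp (contDiff_id.sub contDiff_const)
    have hσCD : ContDiff ℝ 1 σ := by
      rw [hσdef]
      exact (contDiff_const.mul (contDiff_const.sub (contDiff_const.mul
        (Psq_contDiff.comp (contDiff_const.sub contDiff_id))))).add
        (contDiff_const.mul (contDiff_const.mul (hpc (2/3))))
    have hκCD : ContDiff ℝ 1 κ := by
      rw [hκdef]
      exact hσCD.add (contDiff_const.mul
        (((contDiff_const.mul (hpc (1/3))).sub (contDiff_const.mul (hpc (1/2)))).add
          (contDiff_const.mul (hpc (2/3)))))
    have hγCD : ContDiff ℝ 1 γ := by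
      rw [hγdef]
      apply contDiff_pi.mpr
      intro j
      by_cases hj : j = i
      · simp only [if_pos hj]
        exact contDiff_const.add (hκCD.mul contDiff_const)
      · simp only [if_neg hj]
        exact contDiff_const.add (hσCD.mul contDiff_const)
    have hpath : IsMonotonePath a b x' xbar γ := by
      refine ⟨hγCD.continuous.continuousOn, ⟨1, ![0,1], ?_, by norm_num, by rfl, fun j => hγCD.contDiffOn⟩, ?_, ?_, ?_, ?_⟩
      · intro u v huv
        fin_cases u <;> fin_cases v <;> simp_all <;> norm_num
      · funext j
        show x' j + (if j = i then κ 0 else σ 0) * (xbar j - x' j) = x' j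
        by_cases hj : j = i
        · rw [if_pos hj, hκ0]; ring
        · rw [if_neg hj, hσ0]; ring
      · funext j
        show x' j + (if j = i then κ 1 else σ 1) * (xbar j - x' j) = xbar j
        by_cases hj : j = i
        · rw [if_pos hj, hκ1]; ring
        · rw [if_neg hj, hσ1]; ring
      · intro r hr
        rw [huIcc, Set.mem_Icc]
        constructor <;> intro j
        · have hm := hmval r hr j
          have hb := between_bound (hx'lo j) (hx'hi j) (hxblo j) (hxbhi j) hm.1 hm.2
          show a j ⊓ b j ≤ x' j + (if j = i then κ r else σ r) * (xbar j - x' j)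
          exact hb.1
        · have hm := hmval r hr j
          have hb := between_bound (hx'lo j) (hx'hi j) (hxblo j) (hxbhi j) hm.1 hm.2
          show x' j + (if j = i then κ r else σ r) * (xbar j - x' j) ≤ a j ⊔ b j
          exact hb.2
      · intro j
        rcases le_total 0 (xbar j - x' j) with hj | hj
        · left
          intro u hu v hv huv
          have hm : (if j = i then κ u else σ u) ≤ (if j = i then κ v else σ v) := by
            by_cases hji : j = i
            · rw [if_pos hji, if_pos hji]; exact hκmono huv
            · rw [if_neg hji, if_neg hji]; exact hσmono huv
          simp only [hγdef]
          exact add_le_add_right (mul_le_mul_of_nonneg_right hm hj) _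
        · right
          intro u hu v hv huv
          have hm : (if j = i then κ u else σ u) ≤ (if j = i then κ v else σ v) := by
            by_cases hji : j = i
            · rw [if_pos hji, if_pos hji]; exact hκmono huv
            · rw [if_neg hji, if_neg hji]; exact hσmono huv
          simp only [hγdef]
          exact add_le_add_right (mul_le_mul_of_nonpos_right hm hj) _
    have hFmono : MonotoneOn (fun r => F (γ r)) (Set.Icc 0 1) := hnd γ hpath
    set Δi : ℝ := xbar i - x' i with hΔdef
    set g : ℝ → ℝ := fun w => F (Function.update x i w) with hgdef
    set φ : ℝ → ℝ := fun u => g (x i + u * Δi) with hφdef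
    have hγmid : ∀ r ∈ Set.Icc (1/3:ℝ) (2/3), γ r = Function.update x i (x' i + κ r * Δi) := by
      intro r hr
      funext j
      by_cases hji : j = i
      · subst hji
        rw [hγdef]
        simp [Function.update_self, hΔdef]
      · rw [hγdef]
        simp only [if_neg hji, Function.update_of_ne hji]
        rw [hσmid r hr, hxap j]
    have hφmono : MonotoneOn φ (Set.Icc 0 h) := by
      intro u hu v hv huv
      have hsurj : ∀ w ∈ Set.Icc (0:ℝ) h, ∃ r ∈ Set.Icc (1/3:ℝ) (2/3), κ r = t + w := by
        intro w hw
        have hmem : t + w ∈ Set.Icc (κ (1/3)) (κ (2/3)) := by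
          rw [hκthird, hκtwothird]
          exact ⟨by linarith [hw.1], by linarith [hw.2]⟩
        obtain ⟨r, hr, hrw⟩ := intermediate_value_Icc (by norm_num : (1/3:ℝ) ≤ 2/3)
          hκcont.continuousOn hmem
        exact ⟨r, hr, hrw⟩
      obtain ⟨ru, hru, hrue⟩ := hsurj u hu
      obtain ⟨rv, hrv, hrve⟩ := hsurj v hv
      have hγu : γ ru = Function.update x i (x i + u * Δi) := by
        rw [hγmid ru hru, hrue]
        congr 1
        rw [hxap i, hΔdef]; ring
      have hγv : γ rv = Function.update x i (x i + v * Δi) := by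
        rw [hγmid rv hrv, hrve]
        congr 1
        rw [hxap i, hΔdef]; ring
      rcases le_total ru rv with hle | hle
      · have hmono2 := hFmono ⟨by linarith [hru.1], by linarith [hru.2]⟩
          ⟨by linarith [hrv.1], by linarith [hrv.2]⟩ hle
        show g (x i + u * Δi) ≤ g (x i + v * Δi)
        rw [hgdef]
        show F (Function.update x i (x i + u * Δi)) ≤ F (Function.update x i (x i + v * Δi))
        rw [← hγu, ← hγv]
        exact hmono2
      · have h2 : κ rv ≤ κ ru := hκmono hle
        rw [hrue, hrve] at h2
        have huv2 : u = v := le_antisymm huv (by linarith)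
        rw [huv2]
    have hxbox : x ∈ Set.Icc (a ⊓ b) (a ⊔ b) := by
      rw [Set.mem_Icc]
      constructor <;> intro j
      · have hb := between_bound (hx'lo j) (hx'hi j) (hxblo j) (hxbhi j) ht0.le ht1.le
        show a j ⊓ b j ≤ x j
        rw [hxap j]; exact hb.1
      · have hb := between_bound (hx'lo j) (hx'hi j) (hxblo j) (hxbhi j) ht0.le ht1.le
        show x j ≤ a j ⊔ b j
        rw [hxap j]; exact hb.2
    have hupd : Differentiable ℝ (fun w : ℝ => Function.update x i w) := by
      have heq : (fun w : ℝ => Function.update x i w)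
          = fun w => x + (w - x i) • (Pi.single i (1:ℝ) : Fin n → ℝ) := by
        funext w j
        by_cases hji : j = i
        · subst hji
          simp [Function.update_self, Pi.single_eq_same, Pi.add_apply, Pi.smul_apply,
            smul_eq_mul, add_sub_cancel]
        · simp [Function.update_of_ne hji, Pi.single_eq_of_ne hji, Pi.add_apply, Pi.smul_apply]
      rw [heq]
      exact (differentiable_const _).add ((differentiable_id.sub_const _).smul_const _)
    have hSsub : ∀ w ∈ Set.Icc (a i ⊓ b i) (a i ⊔ b i), Function.update x i w ∈ Set.uIcc a b := by
      intro w hw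
      rw [huIcc, Set.mem_Icc]
      constructor <;> intro j <;> by_cases hji : j = i
      · subst hji; rw [Function.update_self]; exact hw.1
      · rw [Function.update_of_ne hji]; exact hxbox.1 j
      · subst hji; rw [Function.update_self]; exact hw.2
      · rw [Function.update_of_ne hji]; exact hxbox.2 j
    have hstrict : a i ⊓ b i < x i ∧ x i < a i ⊔ b i := by
      rcases lt_or_gt_of_ne hΔi with hneg | hpos
      · constructor
        · calc a i ⊓ b i ≤ xbar i := hxblo i
            _ < x i := by rw [hxap i]; nlinarith
        · calc x i < x' i := by rw [hxap i]; nlinarith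
            _ ≤ a i ⊔ b i := hx'hi i
      · constructor
        · calc a i ⊓ b i ≤ x' i := hx'lo i
            _ < x i := by rw [hxap i]; nlinarith
        · calc x i < xbar i := by rw [hxap i]; nlinarith
            _ ≤ a i ⊔ b i := hxbhi i
    have hnh : Set.Icc (a i ⊓ b i) (a i ⊔ b i) ∈ nhds (x i) := Icc_mem_nhds hstrict.1 hstrict.2
    have hgd : DifferentiableAt ℝ g (x i) := by
      have hFd : DifferentiableWithinAt ℝ F (Set.uIcc a b) (Function.update x i (x i)) := by
        rw [Function.update_eq_self]
        exact (hF.differentiableOn one_ne_zero) x (by rw [huIcc]; exact hxbox)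
      have hdw : DifferentiableWithinAt ℝ g (Set.Icc (a i ⊓ b i) (a i ⊔ b i)) (x i) :=
        hFd.comp (x i) (hupd (x i)).differentiableWithinAt hSsub
      exact hdw.differentiableAt hnh
    have hinner : HasDerivAt (fun u : ℝ => x i + u * Δi) Δi 0 := by
      simpa using ((hasDerivAt_id (0:ℝ)).mul_const Δi).const_add (x i)
    have hg2 : HasDerivAt g (deriv g (x i)) ((fun u : ℝ => x i + u * Δi) 0) := by
      simpa using hgd.hasDerivAt
    have hφD : HasDerivAt φ (deriv g (x i) * Δi) 0 := by have := hg2.comp 0 hinner; exact this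
    have hpos := deriv_nonneg_of_monotoneOn hh hφD hφmono
    have hpd : pderiv' F i x = deriv g (x i) := by
      simp only [pderiv', hgdef]
    calc (0:ℝ) ≤ deriv g (x i) * Δi := hpos
      _ = Δi * pderiv' F i x := by rw [hpd, mul_comm]
  have hrw : IG xbar x' F i
      = ∫ t in (0:ℝ)..1, (xbar i - x' i) * pderiv' F i (x' + t • (xbar - x')) := by
    simp only [IG]
    rw [← intervalIntegral.integral_const_mul]
  rw [hrw]
  apply intervalIntegral.integral_nonneg_of_ae_restrict (by norm_num : (0:ℝ) ≤ 1)
  have h1 : ∀ᵐ (s : ℝ), s ≠ 0 ∧ s ≠ 1 := by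
    rw [MeasureTheory.ae_iff]
    have e0 : {s : ℝ | ¬ (s ≠ 0 ∧ s ≠ 1)} ⊆ {0, 1} := by
      intro s hs
      simp only [ne_eq, not_and_or, not_not] at hs
      simpa using hs
    exact measure_mono_null e0 (((Set.finite_singleton (1:ℝ)).insert 0).measure_zero _)
  filter_upwards [ae_restrict_of_ae h1, ae_restrict_mem measurableSet_Icc] with s hs hmem
  exact key s ⟨lt_of_le_of_ne hmem.1 (Ne.symm hs.1), lt_of_le_of_ne hmem.2 hs.2⟩
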